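/- Let G be a group and let A be a set. Equip A^G with its prodiscrete uniform structure and with the shift action of G. Then two configurations x, y ∈ A^G are homoclinic if and only if they are almost equal, i.e., if and only if the set {g ∈ G : x(g) ≠ y(g)} is finite. -/

import Mathlib

open scoped Uniformity
open Filter

/-- The shift action of `G` on `A^G`, namely `(g • x)(h) = x (g⁻¹ h)`. -/
def shift {G A : Type*} [Group G] (g : G) (x : G → A) : G → A := fun h => x (g⁻¹ * h)

/-- In `A^G` with the prodiscrete uniform structure and the shift action of `G`,
two configurations are homoclinic if and only if they are almost equal. -/
theorem homoclinic_iff_almost_equal {G A : Type*} [Group G]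
    [uA : UniformSpace A] (hdisc : uA = ⊥) (x y : G → A) :
    (∀ U ∈ 𝓤 (G → A), ∃ Ω : Finset G, ∀ g : G, g ∉ Ω → (shift g x, shift g y) ∈ U) ↔
      {g : G | x g ≠ y g}.Finite := by
  classical
  have hA : 𝓤 A = 𝓟 SetRel.id := by rw [hdisc]; rfl
  have huni : 𝓤 (G → A) =
      ⨅ h : G, (Filter.comap fun a : (G → A) × (G → A) => (a.1 h, a.2 h)) (𝓟 SetRel.id) := by
    rw [Pi.uniformity]; simp_rw [hA]
  constructor
  · intro H
    -- use the entourage of agreement at 1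
    have hU : {p : (G → A) × (G → A) | p.1 1 = p.2 1} ∈ 𝓤 (G → A) := by
      rw [huni]
      refine Filter.mem_iInf_of_mem (1 : G) ?_
      exact Filter.mem_comap.mpr ⟨SetRel.id, Filter.mem_principal_self _,
        fun p hp => by simpa [SetRel.id] using hp⟩
    obtain ⟨Ω, hΩ⟩ := H _ hU
    have : {g : G | x g ≠ y g} ⊆ (Ω.image (·⁻¹) : Finset G) := by
      intro g hg
      simp only [Finset.coe_image, Set.mem_image, Finset.mem_coe]
      by_contra hc
      have hginv : g⁻¹ ∉ Ω := fun h => hc ⟨g⁻¹, h, inv_inv g⟩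
      have := hΩ g⁻¹ hginv
      simp only [Set.mem_setOf_eq, shift, inv_inv, mul_one] at this
      exact hg this
    exact Set.Finite.subset (Finset.finite_toSet _) this
  · intro hfin U hU
    rw [huni] at hU
    obtain ⟨I, hI, V, hV, hVuniv, -, hUV⟩ := Filter.mem_iInf'.mp hU
    -- each V h contains the diagonal-at-h set
    obtain ⟨F, hF⟩ := hI.exists_finset_coe
    set S := hfin.toFinset
    refine ⟨(F.image fun h => fun s => h * s⁻¹) |>.sup (fun f => S.image f), ?_⟩
    intro g hg
    have key : ∀ h ∈ I, shift g x h = shift g y h := by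
      intro h hhI
      by_contra hne
      have hmem : g⁻¹ * h ∈ S := by
        simp only [S, Set.Finite.mem_toFinset, Set.mem_setOf_eq]
        exact hne
      apply hg
      have hhF : h ∈ F := by rw [← hF] at hhI; exact_mod_cast hhI
      refine Finset.mem_sup.mpr ⟨fun s => h * s⁻¹, Finset.mem_image_of_mem _ hhF, ?_⟩
      refine Finset.mem_image.mpr ⟨g⁻¹ * h, hmem, ?_⟩
      simp [mul_inv_rev]
    -- now (shift g x, shift g y) ∈ ⋂ h, V h ⊆ U? we have U = ⋂ h, V h
    rw [hUV]
    refine Set.mem_iInter.mpr fun h => ?_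
    by_cases hhI : h ∈ I
    · rcases Filter.mem_comap.mp (hV h) with ⟨t, ht, hsub⟩
      apply hsub
      have hid : (shift g x h, shift g y h) ∈ SetRel.id := by
        simp only [SetRel.id, Set.mem_setOf_eq]
        exact key h hhI
      exact Filter.mem_principal.mp ht hid
    · rw [hVuniv h hhI]; trivial
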